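/- (Complementary formula, Theorem 4.) For every integer h, every integer m ≥ 0 and every real number x, E_{m,1/q}^{(h,1)}(1−x) = (−1)^m q^{m+h−1} E_{m,q}^{(h,1)}(x), where E_{m,1/q}^{(h,1)} denotes the same polynomial with q replaced by 1/q (which is again a positive real ≠ 1). -/

import Mathlib

open Finset

/-- The q-number `[x]_q = (1 - q^x)/(1 - q)`, with `q^x = exp (x * log q)` (rpow). -/
noncomputable def qNum (q x : ℝ) : ℝ := (1 - q ^ x) / (1 - q)

/-- `[l]_{-q} = (1 - (-q)^l)/(1 + q)` for a natural number `l`. -/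
noncomputable def qNumNeg (q : ℝ) (l : ℕ) : ℝ := (1 - (-q) ^ l) / (1 + q)

/-- The higher-order q-Euler polynomial
`E_{m,q}^{(h,k)}(x) = ((1+q)^k/(1-q)^m) * Σ_{j=0}^m C(m,j) (-1)^j q^{jx} / Π_{i=0}^{k-1} (1 + q^{h+j-i})`. -/
noncomputable def qE (q : ℝ) (h : ℤ) (k m : ℕ) (x : ℝ) : ℝ :=
  ((1 + q) ^ k / (1 - q) ^ m) *
    ∑ j ∈ Finset.range (m + 1),
      (m.choose j : ℝ) * (-1) ^ j * q ^ ((j : ℝ) * x) /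
        ∏ i ∈ Finset.range k, (1 + q ^ ((h : ℝ) + (j : ℝ) - (i : ℝ)))

theorem stmt_7 (q : ℝ) (hq : 0 < q) (hq1 : q ≠ 1) (h : ℤ) (m : ℕ) (x : ℝ) :
    qE (1 / q) h 1 m (1 - x) = (-1) ^ m * q ^ ((m : ℤ) + h - 1) * qE q h 1 m x := by
  have hq0 : q ≠ 0 := ne_of_gt hq
  have h1q : (1:ℝ) - q ≠ 0 := sub_ne_zero.mpr (Ne.symm hq1)
  unfold qE
  simp only [pow_one, Finset.prod_range_one, Nat.cast_zero, sub_zero]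
  rw [Finset.mul_sum, Finset.mul_sum, Finset.mul_sum]
  refine Finset.sum_congr rfl fun j _ => ?_
  have ht : (0:ℝ) < q ^ ((h:ℝ)) := Real.rpow_pos_of_pos hq _
  have e1 : (1/q) ^ ((j:ℝ)*(1-x)) = q ^ ((j:ℝ)*x) / q ^ j := by
    rw [one_div, Real.inv_rpow hq.le, ← Real.rpow_neg hq.le, ← Real.rpow_natCast q j,
      ← Real.rpow_sub hq]
    congr 1; ring
  have e2 : (1/q) ^ ((h:ℝ)+(j:ℝ)) = (q ^ ((h:ℝ)) * q ^ j)⁻¹ := by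
    rw [one_div, Real.inv_rpow hq.le, Real.rpow_add hq, Real.rpow_natCast]
  have e3 : q ^ ((h:ℝ)+(j:ℝ)) = q ^ ((h:ℝ)) * q ^ j := by
    rw [Real.rpow_add hq, Real.rpow_natCast]
  have e4 : q ^ ((m:ℤ)+h-1) = q ^ m * q ^ ((h:ℝ)) / q := by
    rw [← Real.rpow_intCast q ((m:ℤ)+h-1)]
    push_cast
    rw [Real.rpow_sub hq, Real.rpow_add hq, Real.rpow_natCast, Real.rpow_one]
  have e5 : ((1:ℝ) - 1/q) ^ m = (-1) ^ m * (1-q) ^ m / q ^ m := by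
    have : (1:ℝ) - 1/q = (-1) * (1-q) / q := by field_simp; ring
    rw [this, div_pow, mul_pow]
  have e6 : (1:ℝ) + 1/q = (1+q)/q := by field_simp; ring
  rw [e1, e2, e3, e4, e5, e6]
  set T := q ^ ((h:ℝ)) with hT
  have hden : (1:ℝ) + T * q ^ j ≠ 0 := by positivity
  have hm1 : ((-1:ℝ)) ^ m ≠ 0 := by
    simp
  have h1qm : ((1:ℝ) - q) ^ m ≠ 0 := pow_ne_zero _ h1q
  field_simp
  ring_nf
  simp only [mul_comm m 2, pow_mul, neg_one_sq, one_pow]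
  ring
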